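/- Let A be the generator of a generalised Feller semigroup (P_t)_{t≥0} on 𝓑^ψ(X) satisfying ‖P_t‖ ≤ exp(ωt) for all t ≥ 0. Then A satisfies the generalised positive maximum principle: for f in the domain of A with (ψ^{-1}f) ∨ 0 ≤ ψ(z)^{-1} f(z) for some z ∈ X, one has Af(z) ≤ ω f(z). -/

import Mathlib

open Filter Topology

/-- `f` is a bounded continuous function. -/
def MemCb {X : Type*} [TopologicalSpace X] (g : X → ℝ) : Prop :=
  Continuous g ∧ ∃ M : ℝ, ∀ x, |g x| ≤ M

/-- `f ∈ 𝓑^ψ(X)`: `f` lies in the `‖·‖_ψ`-closure of the bounded continuous functions. -/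
def MemBpsi {X : Type*} [TopologicalSpace X] (ψ : X → ℝ) (f : X → ℝ) : Prop :=
  ∀ ε > (0 : ℝ), ∃ g : X → ℝ, MemCb g ∧ ∀ x, (ψ x)⁻¹ * |f x - g x| ≤ ε

/-- The weighted sup-norm `‖f‖_ψ = sup_x ψ(x)⁻¹ |f x|`. -/
noncomputable def normPsi {X : Type*} (ψ : X → ℝ) (f : X → ℝ) : ℝ :=
  ⨆ x, (ψ x)⁻¹ * |f x|

/-- An admissible weight is bounded below by a positive constant. -/
lemma exists_delta {X : Type*} [TopologicalSpace X] [T2Space X]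
    (ψ : X → ℝ) (hpos : ∀ x, 0 < ψ x)
    (hcomp : ∀ R > (0 : ℝ), IsCompact {x : X | ψ x ≤ R}) :
    ∃ δ > (0 : ℝ), ∀ x, δ ≤ ψ x := by
  by_contra h
  push_neg at h
  set S : ℕ → Set X := fun n => {x | ψ x ≤ 1 / (n + 1)} with hS
  have hcpt : ∀ n, IsCompact (S n) := fun n => hcomp _ (by positivity)
  have hne : ∀ n, (S n).Nonempty := by
    intro n
    obtain ⟨x, hx⟩ := h (1 / (n + 1)) (by positivity)
    exact ⟨x, hx.le⟩
  have hmono : ∀ n, S (n + 1) ⊆ S n := by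
    intro n x hx
    have hstep : (1 : ℝ) / (↑(n + 1) + 1) ≤ 1 / (↑n + 1) := by
      rw [div_le_div_iff₀ (by positivity) (by positivity)]
      push_cast; nlinarith
    exact le_trans hx hstep
  obtain ⟨x, hx⟩ := IsCompact.nonempty_iInter_of_sequence_nonempty_isCompact_isClosed
    S hmono hne (hcpt 0) (fun n => (hcpt n).isClosed)
  simp only [Set.mem_iInter] at hx
  obtain ⟨n, hn⟩ := exists_nat_gt (1 / ψ x)
  have h1 : ψ x ≤ 1 / (n + 1) := hx n
  have h2 : (0 : ℝ) < ψ x := hpos x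
  rw [le_div_iff₀ (by positivity)] at h1
  rw [div_lt_iff₀ h2] at hn
  nlinarith

lemma MemBpsi.sub' {X : Type*} [TopologicalSpace X] {ψ f₁ f₂ : X → ℝ}
    (hpos : ∀ x, 0 < ψ x) (h₁ : MemBpsi ψ f₁) (h₂ : MemBpsi ψ f₂) :
    MemBpsi ψ (f₁ - f₂) := by
  intro ε hε
  obtain ⟨g₁, ⟨hc₁, M₁, hM₁⟩, hg₁⟩ := h₁ (ε / 2) (by positivity)
  obtain ⟨g₂, ⟨hc₂, M₂, hM₂⟩, hg₂⟩ := h₂ (ε / 2) (by positivity)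
  refine ⟨g₁ - g₂, ⟨hc₁.sub hc₂, M₁ + M₂, fun x => ?_⟩, fun x => ?_⟩
  · simp only [Pi.sub_apply]
    calc |g₁ x - g₂ x| ≤ |g₁ x| + |g₂ x| := abs_sub _ _
      _ ≤ M₁ + M₂ := add_le_add (hM₁ x) (hM₂ x)
  · have key : |(f₁ - f₂) x - (g₁ - g₂) x| ≤ |f₁ x - g₁ x| + |f₂ x - g₂ x| := by
      simp only [Pi.sub_apply]
      calc |f₁ x - f₂ x - (g₁ x - g₂ x)| = |(f₁ x - g₁ x) - (f₂ x - g₂ x)| := by ring_nf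
        _ ≤ |f₁ x - g₁ x| + |f₂ x - g₂ x| := abs_sub _ _
    have hinv : (0 : ℝ) ≤ (ψ x)⁻¹ := inv_nonneg.mpr (hpos x).le
    calc (ψ x)⁻¹ * |(f₁ - f₂) x - (g₁ - g₂) x|
        ≤ (ψ x)⁻¹ * (|f₁ x - g₁ x| + |f₂ x - g₂ x|) :=
          mul_le_mul_of_nonneg_left key hinv
      _ = (ψ x)⁻¹ * |f₁ x - g₁ x| + (ψ x)⁻¹ * |f₂ x - g₂ x| := by ring
      _ ≤ ε / 2 + ε / 2 := add_le_add (hg₁ x) (hg₂ x)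
      _ = ε := by ring

lemma MemBpsi.smul' {X : Type*} [TopologicalSpace X] {ψ f : X → ℝ}
    (hpos : ∀ x, 0 < ψ x) (c : ℝ) (h : MemBpsi ψ f) :
    MemBpsi ψ (c • f) := by
  intro ε hε
  have hc1 : (0 : ℝ) < |c| + 1 := by positivity
  obtain ⟨g, ⟨hc, M, hM⟩, hg⟩ := h (ε / (|c| + 1)) (by positivity)
  refine ⟨c • g, ⟨hc.const_smul c, |c| * M, fun x => ?_⟩, fun x => ?_⟩
  · simp only [Pi.smul_apply, smul_eq_mul, abs_mul]
    exact mul_le_mul_of_nonneg_left (hM x) (abs_nonneg c)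
  · have hinv : (0 : ℝ) ≤ (ψ x)⁻¹ := inv_nonneg.mpr (hpos x).le
    simp only [Pi.smul_apply, smul_eq_mul]
    calc (ψ x)⁻¹ * |c * f x - c * g x| = |c| * ((ψ x)⁻¹ * |f x - g x|) := by
          rw [← mul_sub, abs_mul]; ring
      _ ≤ |c| * (ε / (|c| + 1)) := mul_le_mul_of_nonneg_left (hg x) (abs_nonneg c)
      _ ≤ ε := by
          rw [mul_div_assoc', div_le_iff₀ hc1]
          nlinarith [abs_nonneg c]

lemma MemBpsi.posPart' {X : Type*} [TopologicalSpace X] {ψ f : X → ℝ}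
    (hpos : ∀ x, 0 < ψ x) (h : MemBpsi ψ f) :
    MemBpsi ψ (fun x => max (f x) 0) := by
  intro ε hε
  obtain ⟨g, ⟨hc, M, hM⟩, hg⟩ := h ε hε
  refine ⟨fun x => max (g x) 0, ⟨hc.max continuous_const, M, fun x => ?_⟩, fun x => ?_⟩
  · show |max (g x) 0| ≤ M
    rcases le_or_gt (g x) 0 with h0 | h0
    · rw [max_eq_right h0, abs_zero]
      exact le_trans (abs_nonneg (g x)) (hM x)
    · rw [max_eq_left h0.le]; exact hM x
  · have key : |max (f x) 0 - max (g x) 0| ≤ |f x - g x| := abs_max_sub_max_le_abs _ _ _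
    have hinv : (0 : ℝ) ≤ (ψ x)⁻¹ := inv_nonneg.mpr (hpos x).le
    exact le_trans (mul_le_mul_of_nonneg_left key hinv) (hg x)

lemma MemBpsi.bddAbove' {X : Type*} [TopologicalSpace X] {ψ f : X → ℝ} {δ : ℝ}
    (hpos : ∀ x, 0 < ψ x) (hδ : 0 < δ) (hδψ : ∀ x, δ ≤ ψ x) (h : MemBpsi ψ f) :
    BddAbove (Set.range fun x => (ψ x)⁻¹ * |f x|) := by
  obtain ⟨g, ⟨hc, M, hM⟩, hg⟩ := h 1 one_pos
  refine ⟨1 + δ⁻¹ * |M|, ?_⟩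
  rintro _ ⟨x, rfl⟩
  have hinv : (0 : ℝ) ≤ (ψ x)⁻¹ := inv_nonneg.mpr (hpos x).le
  have hinvδ : (ψ x)⁻¹ ≤ δ⁻¹ := inv_anti₀ hδ (hδψ x)
  calc (ψ x)⁻¹ * |f x| ≤ (ψ x)⁻¹ * (|f x - g x| + |g x|) := by
        refine mul_le_mul_of_nonneg_left ?_ hinv
        calc |f x| = |(f x - g x) + g x| := by ring_nf
          _ ≤ |f x - g x| + |g x| := abs_add_le _ _
    _ = (ψ x)⁻¹ * |f x - g x| + (ψ x)⁻¹ * |g x| := by ring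
    _ ≤ 1 + δ⁻¹ * |M| := by
        refine add_le_add (hg x) ?_
        exact mul_le_mul hinvδ ((hM x).trans (le_abs_self M)) (abs_nonneg _)
          (inv_nonneg.mpr hδ.le)

lemma le_normPsi {X : Type*} [TopologicalSpace X] {ψ f : X → ℝ}
    (hb : BddAbove (Set.range fun x => (ψ x)⁻¹ * |f x|)) (x : X) :
    (ψ x)⁻¹ * |f x| ≤ normPsi ψ f :=
  le_ciSup hb x

/-- If `A` generates a generalised Feller semigroup `(P_t)` on `𝓑^ψ(X)` with
`‖P_t‖ ≤ exp(ω t)`, then `A` satisfies the generalised positive maximum principle: if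
`f ∈ dom A` and `(ψ⁻¹ f) ∨ 0 ≤ ψ(z)⁻¹ f(z)` for some `z ∈ X`, then `A f(z) ≤ ω f(z)`. -/
theorem generator_generalised_positive_maximum_principle
    {X : Type*} [TopologicalSpace X] [T2Space X] [CompletelyRegularSpace X] [Nonempty X]
    (ψ : X → ℝ) (hpos : ∀ x, 0 < ψ x)
    (hcomp : ∀ R > (0 : ℝ), IsCompact {x : X | ψ x ≤ R})
    (ω : ℝ)
    (P : ℝ → (X → ℝ) →ₗ[ℝ] (X → ℝ))
    (hinv : ∀ t ≥ (0 : ℝ), ∀ f : X → ℝ, MemBpsi ψ f → MemBpsi ψ (P t f))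
    (hP0 : ∀ f : X → ℝ, MemBpsi ψ f → P 0 f = f)
    (hsemi : ∀ s ≥ (0 : ℝ), ∀ t ≥ (0 : ℝ), ∀ f : X → ℝ, MemBpsi ψ f →
      P (s + t) f = P s (P t f))
    (hpw : ∀ f : X → ℝ, MemBpsi ψ f → ∀ x : X,
      Tendsto (fun t => P t f x) (𝓝[>] (0 : ℝ)) (𝓝 (f x)))
    (hpositive : ∀ t ≥ (0 : ℝ), ∀ f : X → ℝ, MemBpsi ψ f → (∀ x, 0 ≤ f x) →
      ∀ x, 0 ≤ P t f x)
    (hbdd : ∀ t ≥ (0 : ℝ), ∀ f : X → ℝ, MemBpsi ψ f →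
      normPsi ψ (P t f) ≤ Real.exp (ω * t) * normPsi ψ f)
    -- `f ∈ dom A` with `A f = g`:
    (f g : X → ℝ) (hf : MemBpsi ψ f) (hg : MemBpsi ψ g)
    (hgen : Tendsto (fun t => normPsi ψ (fun x => t⁻¹ * (P t f x - f x) - g x))
      (𝓝[>] (0 : ℝ)) (𝓝 0))
    (z : X) (hmax : ∀ x, max ((ψ x)⁻¹ * f x) 0 ≤ (ψ z)⁻¹ * f z) :
    g z ≤ ω * f z := by
  obtain ⟨δ, hδ, hδψ⟩ := exists_delta ψ hpos hcomp
  have hψz : (0 : ℝ) < ψ z := hpos z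
  have hψzinv : (0 : ℝ) < (ψ z)⁻¹ := inv_pos.mpr hψz
  -- f z ≥ 0
  have hfz : 0 ≤ f z := by
    have h0 : (0 : ℝ) ≤ (ψ z)⁻¹ * f z := le_trans (le_max_right _ _) (hmax z)
    nlinarith
  -- the positive part of f
  set fp : X → ℝ := fun x => max (f x) 0 with hfpdef
  have hfp_mem : MemBpsi ψ fp := hf.posPart' hpos
  have hFmem : MemBpsi ψ (fp - f) := hfp_mem.sub' hpos hf
  have hFnn : ∀ x, 0 ≤ (fp - f) x := by
    intro x
    simp only [Pi.sub_apply, hfpdef, sub_nonneg]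
    exact le_max_left _ _
  have hnormfp : normPsi ψ fp ≤ (ψ z)⁻¹ * f z := by
    refine ciSup_le fun x => ?_
    have habs : |fp x| = max (f x) 0 := abs_of_nonneg (le_max_right _ _)
    rw [habs, mul_max_of_nonneg _ _ (inv_nonneg.mpr (hpos x).le), mul_zero]
    exact hmax x
  -- key bound: P t f z ≤ exp(ω t) f z for t > 0
  have key : ∀ t > (0 : ℝ), P t f z ≤ Real.exp (ω * t) * f z := by
    intro t ht
    have h1 : P t f z ≤ P t fp z := by
      have h0 := hpositive t ht.le (fp - f) hFmem hFnn z
      have h2 : P t (fp - f) = P t fp - P t f := map_sub _ _ _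
      rw [h2, Pi.sub_apply] at h0
      linarith
    have hPfp : MemBpsi ψ (P t fp) := hinv t ht.le fp hfp_mem
    have hb := hPfp.bddAbove' hpos hδ hδψ
    have h5 : (ψ z)⁻¹ * P t fp z ≤ Real.exp (ω * t) * ((ψ z)⁻¹ * f z) :=
      calc (ψ z)⁻¹ * P t fp z ≤ (ψ z)⁻¹ * |P t fp z| :=
            mul_le_mul_of_nonneg_left (le_abs_self _) hψzinv.le
        _ ≤ normPsi ψ (P t fp) := le_normPsi hb z
        _ ≤ Real.exp (ω * t) * normPsi ψ fp := hbdd t ht.le fp hfp_mem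
        _ ≤ Real.exp (ω * t) * ((ψ z)⁻¹ * f z) :=
            mul_le_mul_of_nonneg_left hnormfp (Real.exp_nonneg _)
    have h6 : P t fp z ≤ Real.exp (ω * t) * f z := by
      have h7 := mul_le_mul_of_nonneg_left h5 hψz.le
      calc P t fp z = ψ z * ((ψ z)⁻¹ * P t fp z) := by field_simp
        _ ≤ ψ z * (Real.exp (ω * t) * ((ψ z)⁻¹ * f z)) := h7
        _ = Real.exp (ω * t) * f z := by field_simp
    linarith
  -- pointwise convergence of the difference quotient at z
  have hconv : Tendsto (fun t => t⁻¹ * (P t f z - f z)) (𝓝[>] (0 : ℝ)) (𝓝 (g z)) := by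
    have hzero : Tendsto (fun t => t⁻¹ * (P t f z - f z) - g z) (𝓝[>] (0 : ℝ)) (𝓝 0) := by
      have hlim : Tendsto (fun t => ψ z * normPsi ψ (fun x => t⁻¹ * (P t f x - f x) - g x))
          (𝓝[>] (0 : ℝ)) (𝓝 0) := by
        have := hgen.const_mul (ψ z)
        simpa using this
      refine squeeze_zero_norm' ?_ hlim
      filter_upwards [self_mem_nhdsWithin] with t ht
      have htpos : (0 : ℝ) < t := ht
      have m1 : MemBpsi ψ (P t f - f) := (hinv t htpos.le f hf).sub' hpos hf
      have m2 : MemBpsi ψ (t⁻¹ • (P t f - f)) := m1.smul' hpos t⁻¹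
      have m3 : MemBpsi ψ (t⁻¹ • (P t f - f) - g) := m2.sub' hpos hg
      have meq : (fun x => t⁻¹ * (P t f x - f x) - g x) = t⁻¹ • (P t f - f) - g := by
        funext x
        simp [Pi.smul_apply, Pi.sub_apply]
      have m4 : MemBpsi ψ (fun x => t⁻¹ * (P t f x - f x) - g x) := meq ▸ m3
      have hb := m4.bddAbove' hpos hδ hδψ
      have hle := le_normPsi hb z
      have : |t⁻¹ * (P t f z - f z) - g z| =
          ψ z * ((ψ z)⁻¹ * |t⁻¹ * (P t f z - f z) - g z|) := by field_simp
      rw [Real.norm_eq_abs, this]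
      exact mul_le_mul_of_nonneg_left hle hψz.le
    have := hzero.add_const (g z)
    simpa using this
  -- the limit of the upper bound
  have hderiv : HasDerivAt (fun t : ℝ => Real.exp (ω * t)) ω 0 := by
    have h := (Real.hasDerivAt_exp (ω * 0)).comp 0 ((hasDerivAt_id (0 : ℝ)).const_mul ω)
    simpa [Function.comp_def] using h
  have hslope : Tendsto (fun t : ℝ => t⁻¹ * (Real.exp (ω * t) - 1)) (𝓝[>] (0 : ℝ)) (𝓝 ω) := by
    have h1 := hasDerivAt_iff_tendsto_slope.mp hderiv
    have h2 := h1.mono_left (nhdsWithin_mono (0 : ℝ) (fun x hx => ne_of_gt hx))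
    refine h2.congr fun t => ?_
    rw [slope_def_field]
    simp [div_eq_inv_mul]
  have hrhs : Tendsto (fun t : ℝ => t⁻¹ * (Real.exp (ω * t) - 1) * f z) (𝓝[>] (0 : ℝ))
      (𝓝 (ω * f z)) := hslope.mul_const (f z)
  -- conclude
  refine le_of_tendsto_of_tendsto hconv hrhs ?_
  filter_upwards [self_mem_nhdsWithin] with t ht
  have htpos : (0 : ℝ) < t := ht
  have h1 : P t f z - f z ≤ (Real.exp (ω * t) - 1) * f z := by
    have := key t htpos
    nlinarith
  calc t⁻¹ * (P t f z - f z) ≤ t⁻¹ * ((Real.exp (ω * t) - 1) * f z) :=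
        mul_le_mul_of_nonneg_left h1 (inv_nonneg.mpr htpos.le)
    _ = t⁻¹ * (Real.exp (ω * t) - 1) * f z := by ring
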